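/- (Klein's inequality for the von Neumann divergence.) For any n×n real symmetric positive definite matrices X and Y, D_vN(X‖Y) = Tr(X log X − X log Y − X + Y) ≥ 0, with equality if and only if X = Y. -/

import Mathlib

open Matrix

/-- Matrix logarithm of a real symmetric matrix, via the spectral decomposition:
apply the real logarithm to the eigenvalues. (Junk value `0` if not symmetric.) -/
noncomputable def matLog {n : Type*} [Fintype n] [DecidableEq n]
    (A : Matrix n n ℝ) : Matrix n n ℝ :=
  if h : A.IsHermitian then h.cfc Real.log else 0

/-- The von Neumann divergence `D_vN(X‖Y) = Tr(X log X − X log Y − X + Y)`. -/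
noncomputable def DvN {n : Type*} [Fintype n] [DecidableEq n]
    (X Y : Matrix n n ℝ) : ℝ :=
  (X * matLog X - X * matLog Y - X + Y).trace

/-- The symmetric (Jeffery) von Neumann divergence
`J_vN(X:Y) = (1/2)(D_vN(X‖Y) + D_vN(Y‖X))`. -/
noncomputable def JvN {n : Type*} [Fintype n] [DecidableEq n]
    (X Y : Matrix n n ℝ) : ℝ :=
  (1 / 2) * (DvN X Y + DvN Y X)

/-! ### Auxiliary lemmas -/

lemma klein_nonneg {a b : ℝ} (ha : 0 < a) (hb : 0 < b) :
    0 ≤ a * Real.log a - a * Real.log b - a + b := by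
  have h := Real.log_le_sub_one_of_pos (div_pos hb ha)
  rw [Real.log_div hb.ne' ha.ne'] at h
  have h2 : a * (Real.log b - Real.log a) ≤ a * (b / a - 1) :=
    mul_le_mul_of_nonneg_left h ha.le
  have h3 : a * (b / a - 1) = b - a := by field_simp
  nlinarith

lemma klein_eq_zero_iff {a b : ℝ} (ha : 0 < a) (hb : 0 < b) :
    a * Real.log a - a * Real.log b - a + b = 0 ↔ a = b := by
  constructor
  · intro h
    by_contra hne
    have hba : b / a ≠ 1 := by
      intro h1
      exact hne ((div_eq_one_iff_eq ha.ne').mp h1).symm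
    have hlt := Real.log_lt_sub_one_of_pos (div_pos hb ha) hba
    rw [Real.log_div hb.ne' ha.ne'] at hlt
    have h2 : a * (Real.log b - Real.log a) < a * (b / a - 1) :=
      mul_lt_mul_of_pos_left hlt ha
    have h3 : a * (b / a - 1) = b - a := by field_simp
    nlinarith
  · rintro rfl; ring

section Matrices

variable {n : Type*} [Fintype n] [DecidableEq n]

/-- The key trace formula: for Hermitian `A`, `B`,
`Tr(f(A) g(B)) = ∑ᵢⱼ Wᵢⱼ² f(λᵢ) g(μⱼ)` where `W = U* V`. -/
lemma trace_cfc_mul_cfc {A B : Matrix n n ℝ}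
    (hA : A.IsHermitian) (hB : B.IsHermitian) (f g : ℝ → ℝ) :
    (hA.cfc f * hB.cfc g).trace =
      ∑ i, ∑ j,
        ((star (hA.eigenvectorUnitary : Matrix n n ℝ) * (hB.eigenvectorUnitary : Matrix n n ℝ)) i j) ^ 2
          * f (hA.eigenvalues i) * g (hB.eigenvalues j) := by
  set U : Matrix n n ℝ := (hA.eigenvectorUnitary : Matrix n n ℝ)
  set V : Matrix n n ℝ := (hB.eigenvectorUnitary : Matrix n n ℝ)
  set W : Matrix n n ℝ := star U * V with hW
  have key : hA.cfc f * hB.cfc g =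
      U * (diagonal (f ∘ hA.eigenvalues) * W * diagonal (g ∘ hB.eigenvalues) * star V) := by
    rw [Matrix.IsHermitian.cfc, Matrix.IsHermitian.cfc]
    simp only [RCLike.ofReal_real_eq_id, Function.id_comp, hW, Unitary.conjStarAlgAut_apply, Unitary.coe_star]
    noncomm_ring
  rw [key, Matrix.trace_mul_comm]
  have hVU : star V * U = star W := by
    simp [hW, StarMul.star_mul]
  rw [show diagonal (f ∘ hA.eigenvalues) * W * diagonal (g ∘ hB.eigenvalues) * star V * U
      = diagonal (f ∘ hA.eigenvalues) * W * diagonal (g ∘ hB.eigenvalues) * (star V * U) by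
        noncomm_ring, hVU]
  rw [Matrix.trace]
  congr 1
  ext i
  rw [Matrix.diag_apply, Matrix.mul_apply]
  congr 1
  ext j
  rw [Matrix.mul_diagonal, Matrix.diagonal_mul, Matrix.star_apply]
  simp only [Function.comp_apply, star_trivial]
  ring

lemma W_mul_star_W {A B : Matrix n n ℝ} (hA : A.IsHermitian) (hB : B.IsHermitian) :
    (star (hA.eigenvectorUnitary : Matrix n n ℝ) * (hB.eigenvectorUnitary : Matrix n n ℝ)) *
      star (star (hA.eigenvectorUnitary : Matrix n n ℝ) * (hB.eigenvectorUnitary : Matrix n n ℝ)) = 1 := by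
  have hU : (hA.eigenvectorUnitary : Matrix n n ℝ) * star (hA.eigenvectorUnitary : Matrix n n ℝ) = 1 :=
    Matrix.mem_unitaryGroup_iff.mp hA.eigenvectorUnitary.2
  have hU' : star (hA.eigenvectorUnitary : Matrix n n ℝ) * (hA.eigenvectorUnitary : Matrix n n ℝ) = 1 :=
    Matrix.mem_unitaryGroup_iff'.mp hA.eigenvectorUnitary.2
  have hV : (hB.eigenvectorUnitary : Matrix n n ℝ) * star (hB.eigenvectorUnitary : Matrix n n ℝ) = 1 :=
    Matrix.mem_unitaryGroup_iff.mp hB.eigenvectorUnitary.2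
  rw [StarMul.star_mul, star_star]
  calc star (hA.eigenvectorUnitary : Matrix n n ℝ) * (hB.eigenvectorUnitary : Matrix n n ℝ) *
        (star (hB.eigenvectorUnitary : Matrix n n ℝ) * (hA.eigenvectorUnitary : Matrix n n ℝ))
      = star (hA.eigenvectorUnitary : Matrix n n ℝ) *
        ((hB.eigenvectorUnitary : Matrix n n ℝ) * star (hB.eigenvectorUnitary : Matrix n n ℝ)) *
        (hA.eigenvectorUnitary : Matrix n n ℝ) := by noncomm_ring
    _ = 1 := by rw [hV, mul_one, hU']

lemma star_W_mul_W {A B : Matrix n n ℝ} (hA : A.IsHermitian) (hB : B.IsHermitian) :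
    star (star (hA.eigenvectorUnitary : Matrix n n ℝ) * (hB.eigenvectorUnitary : Matrix n n ℝ)) *
      (star (hA.eigenvectorUnitary : Matrix n n ℝ) * (hB.eigenvectorUnitary : Matrix n n ℝ)) = 1 := by
  have hU : (hA.eigenvectorUnitary : Matrix n n ℝ) * star (hA.eigenvectorUnitary : Matrix n n ℝ) = 1 :=
    Matrix.mem_unitaryGroup_iff.mp hA.eigenvectorUnitary.2
  have hV' : star (hB.eigenvectorUnitary : Matrix n n ℝ) * (hB.eigenvectorUnitary : Matrix n n ℝ) = 1 :=
    Matrix.mem_unitaryGroup_iff'.mp hB.eigenvectorUnitary.2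
  rw [StarMul.star_mul, star_star]
  calc star (hB.eigenvectorUnitary : Matrix n n ℝ) * (hA.eigenvectorUnitary : Matrix n n ℝ) *
        (star (hA.eigenvectorUnitary : Matrix n n ℝ) * (hB.eigenvectorUnitary : Matrix n n ℝ))
      = star (hB.eigenvectorUnitary : Matrix n n ℝ) *
        ((hA.eigenvectorUnitary : Matrix n n ℝ) * star (hA.eigenvectorUnitary : Matrix n n ℝ)) *
        (hB.eigenvectorUnitary : Matrix n n ℝ) := by noncomm_ring
    _ = 1 := by rw [hU, mul_one, hV']

lemma cfc_id_eq {A : Matrix n n ℝ} (hA : A.IsHermitian) : hA.cfc id = A := by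
  rw [Matrix.IsHermitian.cfc]
  simp only [RCLike.ofReal_real_eq_id, Function.id_comp, Function.comp_id]
  have := hA.spectral_theorem
  simp only [RCLike.ofReal_real_eq_id, Function.id_comp] at this
  exact this.symm

lemma cfc_one_eq {A : Matrix n n ℝ} (hA : A.IsHermitian) : hA.cfc (fun _ => 1) = 1 := by
  rw [Matrix.IsHermitian.cfc]
  simp only [RCLike.ofReal_real_eq_id]
  have : (Matrix.diagonal (id ∘ (fun (_ : ℝ) => (1:ℝ)) ∘ hA.eigenvalues) : Matrix n n ℝ) = 1 := by
    rw [← Matrix.diagonal_one]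
    congr 1
  rw [this, Unitary.conjStarAlgAut_apply, mul_one]
  exact Matrix.mem_unitaryGroup_iff.mp hA.eigenvectorUnitary.2

end Matrices

/-- Klein's inequality for the von Neumann divergence: `D_vN(X‖Y) ≥ 0`,
with equality iff `X = Y`. -/
theorem DvN_nonneg_and_eq_zero_iff {n : Type*} [Fintype n] [DecidableEq n]
    (X Y : Matrix n n ℝ) (hX : X.PosDef) (hY : Y.PosDef) :
    0 ≤ DvN X Y ∧ (DvN X Y = 0 ↔ X = Y) := by
  have hXh : X.IsHermitian := hX.1
  have hYh : Y.IsHermitian := hY.1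
  set U : Matrix n n ℝ := (hXh.eigenvectorUnitary : Matrix n n ℝ) with hUdef
  set V : Matrix n n ℝ := (hYh.eigenvectorUnitary : Matrix n n ℝ) with hVdef
  set W : Matrix n n ℝ := star U * V with hWdef
  set lam := hXh.eigenvalues with hlam
  set mu := hYh.eigenvalues with hmu
  have hlampos : ∀ i, 0 < lam i := hX.eigenvalues_pos
  have hmupos : ∀ j, 0 < mu j := hY.eigenvalues_pos
  -- row and column sums of W ⊙ W
  have hrow : ∀ i, ∑ j, (W i j) ^ 2 = 1 := by
    intro i
    have h := W_mul_star_W hXh hYh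
    rw [← hUdef, ← hVdef, ← hWdef] at h
    have h2 := congrFun (congrFun h i) i
    rw [Matrix.mul_apply] at h2
    simp only [Matrix.one_apply_eq] at h2
    rw [← h2]
    refine Finset.sum_congr rfl fun j _ => ?_
    rw [Matrix.star_apply, star_trivial, pow_two]
  have hcol : ∀ j, ∑ i, (W i j) ^ 2 = 1 := by
    intro j
    have h := star_W_mul_W hXh hYh
    rw [← hUdef, ← hVdef, ← hWdef] at h
    have h2 := congrFun (congrFun h j) j
    rw [Matrix.mul_apply] at h2
    simp only [Matrix.one_apply_eq] at h2
    rw [← h2]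
    refine Finset.sum_congr rfl fun i _ => ?_
    rw [Matrix.star_apply, star_trivial, pow_two]
  -- matLog unfolds
  have hlogX : matLog X = hXh.cfc Real.log := dif_pos hXh
  have hlogY : matLog Y = hYh.cfc Real.log := dif_pos hYh
  -- the four traces
  have h1 : (X * matLog X).trace = ∑ i, ∑ j, (W i j) ^ 2 * (lam i * Real.log (lam i)) := by
    have hre : X * hXh.cfc Real.log = hXh.cfc id * hXh.cfc Real.log := by
      rw [cfc_id_eq]
    rw [hlogX, hre, trace_cfc_mul_cfc hXh hXh]
    have hUU : star U * U = 1 := Matrix.mem_unitaryGroup_iff'.mp hXh.eigenvectorUnitary.2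
    rw [show (star (hXh.eigenvectorUnitary : Matrix n n ℝ) *
        (hXh.eigenvectorUnitary : Matrix n n ℝ)) = (1 : Matrix n n ℝ) from hUU]
    have hcollapse : ∀ i : n, ∑ j, ((1 : Matrix n n ℝ) i j) ^ 2 * id (lam i) * Real.log (lam j)
        = lam i * Real.log (lam i) := by
      intro i
      rw [Finset.sum_eq_single i]
      · simp [Matrix.one_apply_eq]
      · intro j _ hj
        simp [Matrix.one_apply_ne (Ne.symm hj)]
      · simp
    calc ∑ i, ∑ j, ((1 : Matrix n n ℝ) i j) ^ 2 * id (lam i) * Real.log (lam j)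
        = ∑ i, lam i * Real.log (lam i) := Finset.sum_congr rfl fun i _ => hcollapse i
      _ = ∑ i, (∑ j, (W i j) ^ 2) * (lam i * Real.log (lam i)) := by
          apply Finset.sum_congr rfl; intro i _; rw [hrow i, one_mul]
      _ = ∑ i, ∑ j, (W i j) ^ 2 * (lam i * Real.log (lam i)) := by
          apply Finset.sum_congr rfl; intro i _; rw [Finset.sum_mul]
  have h2 : (X * matLog Y).trace = ∑ i, ∑ j, (W i j) ^ 2 * (lam i * Real.log (mu j)) := by
    have hre : X * hYh.cfc Real.log = hXh.cfc id * hYh.cfc Real.log := by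
      rw [cfc_id_eq]
    rw [hlogY, hre, trace_cfc_mul_cfc hXh hYh]
    simp only [← hUdef, ← hVdef, ← hWdef]
    refine Finset.sum_congr rfl fun i _ => Finset.sum_congr rfl fun j _ => by simp [mul_assoc]; left; rfl
  have h3 : X.trace = ∑ i, ∑ j, (W i j) ^ 2 * lam i := by
    have : X.trace = (hXh.cfc id * hYh.cfc (fun _ => 1)).trace := by
      rw [cfc_id_eq hXh, cfc_one_eq hYh, mul_one]
    rw [this, trace_cfc_mul_cfc hXh hYh]
    simp only [← hUdef, ← hVdef, ← hWdef]
    refine Finset.sum_congr rfl fun i _ => Finset.sum_congr rfl fun j _ => by simp; left; rfl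
  have h4 : Y.trace = ∑ i, ∑ j, (W i j) ^ 2 * mu j := by
    have : Y.trace = (hXh.cfc (fun _ => 1) * hYh.cfc id).trace := by
      rw [cfc_id_eq hYh, cfc_one_eq hXh, one_mul]
    rw [this, trace_cfc_mul_cfc hXh hYh]
    simp only [← hUdef, ← hVdef, ← hWdef]
    refine Finset.sum_congr rfl fun i _ => Finset.sum_congr rfl fun j _ => by simp; left; rfl
  -- the divergence as a double sum
  have hD : DvN X Y = ∑ i, ∑ j, (W i j) ^ 2 *
      (lam i * Real.log (lam i) - lam i * Real.log (mu j) - lam i + mu j) := by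
    rw [DvN, Matrix.trace_add, Matrix.trace_sub, Matrix.trace_sub, h1, h2, h3, h4]
    rw [← Finset.sum_sub_distrib, ← Finset.sum_sub_distrib, ← Finset.sum_add_distrib]
    apply Finset.sum_congr rfl; intro i _
    rw [← Finset.sum_sub_distrib, ← Finset.sum_sub_distrib, ← Finset.sum_add_distrib]
    apply Finset.sum_congr rfl; intro j _
    ring
  have hterm_nonneg : ∀ i ∈ Finset.univ, ∀ j ∈ (Finset.univ : Finset n),
      0 ≤ (W i j) ^ 2 * (lam i * Real.log (lam i) - lam i * Real.log (mu j) - lam i + mu j) := by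
    intro i _ j _
    exact mul_nonneg (sq_nonneg _) (klein_nonneg (hlampos i) (hmupos j))
  have hnonneg : 0 ≤ DvN X Y := by
    rw [hD]
    exact Finset.sum_nonneg fun i hi => Finset.sum_nonneg fun j hj => hterm_nonneg i hi j hj
  refine ⟨hnonneg, ?_, ?_⟩
  · -- equality implies X = Y
    intro h0
    rw [hD] at h0
    have hall : ∀ i ∈ Finset.univ, ∀ j ∈ (Finset.univ : Finset n),
        (W i j) ^ 2 * (lam i * Real.log (lam i) - lam i * Real.log (mu j) - lam i + mu j) = 0 := by
      have := (Finset.sum_eq_zero_iff_of_nonneg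
        (fun i _ => Finset.sum_nonneg fun j hj => hterm_nonneg i (Finset.mem_univ i) j hj)).mp h0
      intro i hi j hj
      exact (Finset.sum_eq_zero_iff_of_nonneg
        (fun j hj => hterm_nonneg i hi j hj)).mp (this i hi) j hj
    have hkey : ∀ i j, W i j = 0 ∨ lam i = mu j := by
      intro i j
      rcases mul_eq_zero.mp (hall i (Finset.mem_univ i) j (Finset.mem_univ j)) with h | h
      · left; exact pow_eq_zero_iff (by norm_num) |>.mp h
      · right; exact (klein_eq_zero_iff (hlampos i) (hmupos j)).mp h
    -- diagonal lam * W = W * diagonal mu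
    have hcomm : Matrix.diagonal lam * W = W * Matrix.diagonal mu := by
      ext i j
      rw [Matrix.diagonal_mul, Matrix.mul_diagonal]
      rcases hkey i j with h | h
      · rw [h, mul_zero, zero_mul]
      · rw [h]; ring
    have hUU : U * star U = 1 := Matrix.mem_unitaryGroup_iff.mp hXh.eigenvectorUnitary.2
    have hVV : V * star V = 1 := Matrix.mem_unitaryGroup_iff.mp hYh.eigenvectorUnitary.2
    have hXeq : X = U * Matrix.diagonal lam * star U := by
      have := hXh.spectral_theorem
      simpa [RCLike.ofReal_real_eq_id] using this
    have hYeq : Y = V * Matrix.diagonal mu * star V := by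
      have := hYh.spectral_theorem
      simpa [RCLike.ofReal_real_eq_id] using this
    calc X = U * Matrix.diagonal lam * star U := hXeq
      _ = U * Matrix.diagonal lam * star U * (V * star V) := by rw [hVV, mul_one]
      _ = U * (Matrix.diagonal lam * (star U * V)) * star V := by noncomm_ring
      _ = U * ((star U * V) * Matrix.diagonal mu) * star V := by rw [← hWdef, hcomm]
      _ = (U * star U) * (V * Matrix.diagonal mu * star V) := by noncomm_ring
      _ = V * Matrix.diagonal mu * star V := by rw [hUU, one_mul]
      _ = Y := hYeq.symm
  · -- X = Y implies equality
    rintro rfl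
    have : X * matLog X - X * matLog X - X + X = 0 := by abel
    rw [DvN, this, Matrix.trace_zero]
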